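/- arXiv:2407.08589 — 3 statements merged into one kernel-verified Lean document; each statement's English description precedes it below -/
import Mathlib

section
/- Let q be a prime power, d ≥ 2 and 1 ≤ k < d integers, E ⊆ F_q^k, F ⊆ F_q^{d−k}, and let E ⊕ F = {(x,y) : x ∈ E, y ∈ F} ⊆ F_q^d. Then for every real p ∈ [1,∞), the following exact identity holds: ‖(E ⊕ F)^∧‖_p^p = ‖Ê‖_p^p · ‖F̂‖_p^p + q^{−k}·(q^{−k}·#E)^p · ‖F̂‖_p^p + q^{−(d−k)}·(q^{−(d−k)}·#F)^p · ‖Ê‖_p^p, where Ê and its norm are computed in the ambient space F_q^k, F̂ and its norm are computed in F_q^{d−k}, and (E ⊕ F)^∧ and its norm are computed in F_q^d. (This identity underlies the fact that if E is (p,s)-Salem and F is (p,t)-Salem then E ⊕ F is (p,s′)-Salem for the exponent s′ given in the paper.) -/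
open Finset

/-- The Fourier transform of (the indicator of) a set `E` in a finite vector space
`F_q^ι` (so `F_q^d` when `#ι = d`): `Ê(x) = q^{-#ι} ∑_{y ∈ E} χ(-x·y)`. -/
noncomputable def fourierTransform {F : Type} [Field F] [Fintype F] [DecidableEq F]
    {ι : Type} [Fintype ι] [DecidableEq ι]
    (χ : AddChar F ℂ) (E : Finset (ι → F)) (x : ι → F) : ℂ :=
  ((Fintype.card F : ℂ) ^ Fintype.card ι)⁻¹ * ∑ y ∈ E, χ (-(∑ i, x i * y i))

/-- `‖Ê‖_p = ( q^{-#ι} ∑_{x ≠ 0} |Ê(x)|^p )^{1/p}`. -/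
noncomputable def lpNorm {F : Type} [Field F] [Fintype F] [DecidableEq F]
    {ι : Type} [Fintype ι] [DecidableEq ι]
    (χ : AddChar F ℂ) (E : Finset (ι → F)) (p : ℝ) : ℝ :=
  (((Fintype.card F : ℝ) ^ Fintype.card ι)⁻¹ *
      ∑ x ∈ Finset.univ.filter (fun x : ι → F => x ≠ 0),
        ‖fourierTransform χ E x‖ ^ p) ^ (1 / p)

lemma lpNorm_rpow {F : Type} [Field F] [Fintype F] [DecidableEq F]
    {ι : Type} [Fintype ι] [DecidableEq ι]
    (χ : AddChar F ℂ) (E : Finset (ι → F)) {p : ℝ} (hp : 1 ≤ p) :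
    lpNorm χ E p ^ p = ((Fintype.card F : ℝ) ^ Fintype.card ι)⁻¹ *
      ∑ x ∈ Finset.univ.filter (fun x : ι → F => x ≠ 0),
        ‖fourierTransform χ E x‖ ^ p := by
  have hp0 : p ≠ 0 := by linarith
  have hX : (0:ℝ) ≤ ((Fintype.card F : ℝ) ^ Fintype.card ι)⁻¹ *
      ∑ x ∈ Finset.univ.filter (fun x : ι → F => x ≠ 0),
        ‖fourierTransform χ E x‖ ^ p := by positivity
  rw [lpNorm, ← Real.rpow_mul hX, one_div_mul_cancel hp0, Real.rpow_one]

lemma fourier_sum_elim {F : Type} [Field F] [Fintype F] [DecidableEq F]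
    {κ ι : Type} [Fintype κ] [DecidableEq κ] [Fintype ι] [DecidableEq ι]
    (χ : AddChar F ℂ) (E : Finset (κ → F)) (G : Finset (ι → F)) (x : κ ⊕ ι → F) :
    fourierTransform χ ((E ×ˢ G).image fun z => (Sum.elim z.1 z.2 : κ ⊕ ι → F)) x =
      fourierTransform χ E (x ∘ Sum.inl) * fourierTransform χ G (x ∘ Sum.inr) := by
  unfold fourierTransform
  rw [Finset.sum_image (by
    intro a _ b _ h
    have h1 : a.1 = b.1 := funext fun i => congrFun h (Sum.inl i)
    have h2 : a.2 = b.2 := funext fun i => congrFun h (Sum.inr i)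
    exact Prod.ext h1 h2)]
  have hs : ∀ z : (κ → F) × (ι → F),
      χ (-(∑ i, x i * (Sum.elim z.1 z.2 : κ ⊕ ι → F) i)) =
      χ (-(∑ i, (x ∘ Sum.inl) i * z.1 i)) * χ (-(∑ i, (x ∘ Sum.inr) i * z.2 i)) := by
    intro z
    rw [Fintype.sum_sum_type, neg_add, AddChar.map_add_eq_mul]
    rfl
  rw [Finset.sum_congr rfl fun z _ => hs z, Finset.sum_product]
  simp only [← Finset.sum_mul, ← Finset.mul_sum]
  rw [Fintype.card_sum, pow_add, mul_inv]
  ring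

lemma abs_fourier_zero {F : Type} [Field F] [Fintype F] [DecidableEq F]
    {ι : Type} [Fintype ι] [DecidableEq ι]
    (χ : AddChar F ℂ) (E : Finset (ι → F)) :
    ‖fourierTransform χ E (0 : ι → F)‖ =
      ((Fintype.card F : ℝ) ^ Fintype.card ι)⁻¹ * E.card := by
  have : fourierTransform χ E (0 : ι → F) =
      ((Fintype.card F : ℂ) ^ Fintype.card ι)⁻¹ * E.card := by
    unfold fourierTransform
    congr 1
    simp
  rw [this, norm_mul, norm_inv, norm_pow, Complex.norm_natCast, Complex.norm_natCast]

lemma sum_filter_ne_zero_eq {α : Type} [Fintype α] [DecidableEq α] [Zero α] (f : α → ℝ) :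
    ∑ x ∈ Finset.univ.filter (fun x : α => x ≠ 0), f x = ∑ x, f x - f 0 := by
  rw [Finset.filter_ne' Finset.univ 0, Finset.sum_erase_eq_sub (Finset.mem_univ 0)]

/-- The exact product identity for the `L^p` norm of the Fourier transform of a direct
sum `E ⊕ G ⊆ F_q^k × F_q^{d-k} ≅ F_q^d` of sets `E ⊆ F_q^k`, `G ⊆ F_q^{d-k}`. -/
theorem lp_direct_sum {F : Type} [Field F] [Fintype F] [DecidableEq F]
    (d k : ℕ) (hd : 2 ≤ d) (hk : 1 ≤ k) (hkd : k < d)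
    (χ : AddChar F ℂ) (hχ : ∃ a, χ a ≠ 1)
    (E : Finset (Fin k → F)) (G : Finset (Fin (d - k) → F))
    (p : ℝ) (hp : 1 ≤ p) :
    lpNorm χ ((E ×ˢ G).image fun z => (Sum.elim z.1 z.2 : Fin k ⊕ Fin (d - k) → F)) p ^ p =
      lpNorm χ E p ^ p * lpNorm χ G p ^ p
        + ((Fintype.card F : ℝ) ^ k)⁻¹ *
            (((Fintype.card F : ℝ) ^ k)⁻¹ * (E.card : ℝ)) ^ p * lpNorm χ G p ^ p
        + ((Fintype.card F : ℝ) ^ (d - k))⁻¹ *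
            (((Fintype.card F : ℝ) ^ (d - k))⁻¹ * (G.card : ℝ)) ^ p * lpNorm χ E p ^ p := by
  have hq1 : (1:ℝ) ≤ (Fintype.card F : ℝ) := by
    exact_mod_cast Nat.one_le_iff_ne_zero.mpr Fintype.card_ne_zero
  set H := (E ×ˢ G).image fun z => (Sum.elim z.1 z.2 : Fin k ⊕ Fin (d - k) → F) with hH
  have hprod : ∀ x : Fin k ⊕ Fin (d-k) → F,
      ‖fourierTransform χ H x‖ ^ p =
      ‖fourierTransform χ E (x ∘ Sum.inl)‖ ^ p *
        ‖fourierTransform χ G (x ∘ Sum.inr)‖ ^ p := by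
    intro x
    rw [hH, fourier_sum_elim, norm_mul]
    exact Real.mul_rpow (by positivity) (by positivity)
  have hsum : ∑ x : Fin k ⊕ Fin (d-k) → F, ‖fourierTransform χ H x‖ ^ p =
      (∑ u, ‖fourierTransform χ E u‖ ^ p) *
      (∑ v, ‖fourierTransform χ G v‖ ^ p) := by
    rw [Finset.sum_congr rfl fun x _ => hprod x]
    have he := Equiv.sum_comp (Equiv.sumArrowEquivProdArrow (Fin k) (Fin (d-k)) F)
      (fun uv : ((Fin k → F) × (Fin (d-k) → F)) =>
        ‖fourierTransform χ E uv.1‖ ^ p *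
          ‖fourierTransform χ G uv.2‖ ^ p)
    rw [show (∑ x : Fin k ⊕ Fin (d-k) → F,
        ‖fourierTransform χ E (x ∘ Sum.inl)‖ ^ p *
          ‖fourierTransform χ G (x ∘ Sum.inr)‖ ^ p) =
      ∑ uv : (Fin k → F) × (Fin (d-k) → F),
        ‖fourierTransform χ E uv.1‖ ^ p *
          ‖fourierTransform χ G uv.2‖ ^ p from he,
      Fintype.sum_prod_type]
    simp only [Finset.sum_mul, Finset.mul_sum]
    exact Finset.sum_comm
  have hzero : ‖fourierTransform χ H 0‖ ^ p =
      ‖fourierTransform χ E 0‖ ^ p * ‖fourierTransform χ G 0‖ ^ p := by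
    have := hprod 0
    simpa using this
  have hck : Fintype.card (Fin k) = k := Fintype.card_fin k
  have hcdk : Fintype.card (Fin (d-k)) = d - k := Fintype.card_fin (d-k)
  have haE : ‖fourierTransform χ E 0‖ ^ p =
      (((Fintype.card F : ℝ) ^ k)⁻¹ * (E.card : ℝ)) ^ p := by
    rw [abs_fourier_zero, hck]
  have haG : ‖fourierTransform χ G 0‖ ^ p =
      (((Fintype.card F : ℝ) ^ (d-k))⁻¹ * (G.card : ℝ)) ^ p := by
    rw [abs_fourier_zero, hcdk]
  have hcard : ((Fintype.card F : ℝ) ^ Fintype.card (Fin k ⊕ Fin (d-k)))⁻¹ =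
      ((Fintype.card F : ℝ) ^ k)⁻¹ * ((Fintype.card F : ℝ) ^ (d-k))⁻¹ := by
    rw [Fintype.card_sum, Fintype.card_fin, Fintype.card_fin, pow_add, mul_inv]
  rw [lpNorm_rpow χ H hp, lpNorm_rpow χ E hp, lpNorm_rpow χ G hp]
  rw [sum_filter_ne_zero_eq, sum_filter_ne_zero_eq, sum_filter_ne_zero_eq]
  rw [hcard, hck, hcdk, hsum, hzero, haE, haG]
  ring
end

section
/- Let q be a prime power and suppose d = m·n for integers m ≥ 2 and n ≥ 1. Let E = { (k, k, …, k) : k ∈ F_q^n } ⊆ F_q^d be the diagonal consisting of m copies of each k ∈ F_q^n. Then #E = q^n and for every real p ∈ [1,∞) the exact identity ‖Ê‖_p^p = q^{−d} · (q^{d−n} − 1) · q^{(n−d)p} holds. In particular ‖Ê‖_p ≤ q^{−d}(#E)^{1−1/p} with equality up to a factor tending to 1, so E is (p,s)-Salem if and only if s ≤ 1/p. -/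
open Finset

private def sumHom (F : Type) [Field F] (m n : ℕ) :
    (Fin m × Fin n → F) →+ (Fin n → F) where
  toFun x := fun i => ∑ j, x (j, i)
  map_zero' := by ext i; simp
  map_add' x y := by ext i; simp [Finset.sum_add_distrib]

private lemma charSum {F : Type} [Field F] [Fintype F] [DecidableEq F] {n : ℕ}
    (χ : AddChar F ℂ) (hχ : ∃ a, χ a ≠ 1) (c : Fin n → F) :
    ∑ k : Fin n → F, χ (-(∑ i, c i * k i)) =
      if c = 0 then ((Fintype.card F : ℂ) ^ n) else 0 := by
  classical
  set φ : (Fin n → F) →+ F :=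
    { toFun := fun k => -(∑ i, c i * k i)
      map_zero' := by simp
      map_add' := fun k k' => by
        simp [mul_add, Finset.sum_add_distrib]; ring } with hφ
  set ψ : AddChar (Fin n → F) ℂ := χ.compAddMonoidHom φ with hψ
  have hψapp : ∀ k, ψ k = χ (-(∑ i, c i * k i)) := fun k => rfl
  split_ifs with hc
  · subst hc
    simp [Fintype.card_fun]
  · have hne : ψ ≠ 0 := by
      obtain ⟨i0, hi0⟩ := Function.ne_iff.1 hc
      obtain ⟨a, ha⟩ := hχ
      rw [AddChar.ne_zero_iff]
      set k0 : Fin n → F := Pi.single i0 (-((c i0)⁻¹ * a)) with hk0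
      refine ⟨k0, ?_⟩
      have hsum : ∑ i, c i * k0 i = -a := by
        rw [hk0]
        rw [Finset.sum_eq_single i0]
        · rw [Pi.single_eq_same]
          have hi0' : c i0 ≠ 0 := hi0
          field_simp
        · intro b _ hb
          rw [Pi.single_eq_of_ne hb, mul_zero]
        · simp
      rw [hψapp, hsum, neg_neg]
      exact ha
    have := AddChar.sum_eq_zero_iff_ne_zero.2 hne
    rw [← this]
    exact Finset.sum_congr rfl fun k _ => (hψapp k).symm

private lemma kerCard {F : Type} [Field F] [Fintype F] [DecidableEq F] {m n : ℕ}
    (hm : 1 ≤ m) :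
    (Finset.univ.filter fun x : Fin m × Fin n → F =>
       (fun i => ∑ j, x (j, i)) = (0 : Fin n → F)).card
      = Fintype.card F ^ (m * n - n) := by
  classical
  set L := sumHom F m n with hL
  have hsurj : Function.Surjective L := by
    intro c
    refine ⟨fun ji => if ji.1 = (⟨0, hm⟩ : Fin m) then c ji.2 else 0, ?_⟩
    funext i
    show (∑ j, if j = (⟨0, hm⟩ : Fin m) then c i else 0) = c i
    rw [Finset.sum_ite_eq' Finset.univ (⟨0, hm⟩ : Fin m) (fun _ => c i)]
    simp
  have h1 : Nat.card (Fin m × Fin n → F)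
      = Nat.card ((Fin m × Fin n → F) ⧸ L.ker) * Nat.card L.ker :=
    AddSubgroup.card_eq_card_quotient_mul_card_addSubgroup _
  have h2 : Nat.card ((Fin m × Fin n → F) ⧸ L.ker) = Nat.card (Fin n → F) :=
    Nat.card_congr (QuotientAddGroup.quotientKerEquivOfSurjective L hsurj).toEquiv
  have h3 : Nat.card L.ker
      = (Finset.univ.filter fun x : Fin m × Fin n → F =>
          (fun i => ∑ j, x (j, i)) = (0 : Fin n → F)).card := by
    rw [Nat.card_eq_fintype_card, ← Fintype.card_subtype]
    exact Fintype.card_congr (Equiv.subtypeEquivRight fun x => L.mem_ker)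
  have hdom : Nat.card (Fin m × Fin n → F) = Fintype.card F ^ (m * n) := by
    simp [Nat.card_eq_fintype_card, Fintype.card_fun]
  have hcod : Nat.card (Fin n → F) = Fintype.card F ^ n := by
    simp [Nat.card_eq_fintype_card, Fintype.card_fun]
  rw [hdom, h2, hcod, h3] at h1
  have hle : n ≤ m * n := Nat.le_mul_of_pos_left n hm
  have hq : 0 < Fintype.card F ^ n := pow_pos Fintype.card_pos _
  have key : Fintype.card F ^ (m * n)
      = Fintype.card F ^ (m * n - n) * Fintype.card F ^ n := by
    rw [← pow_add, Nat.sub_add_cancel hle]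
  rw [key] at h1
  exact Nat.eq_of_mul_eq_mul_right hq (by linarith [h1] : _)

/-- For the diagonal `E = {(k,…,k) : k ∈ F_q^n} ⊆ (F_q^n)^m ≅ F_q^{mn} = F_q^d`
(with `m ≥ 2`, `n ≥ 1`): `#E = q^n`, the exact identity
`‖Ê‖_p^p = q^{-d}(q^{d-n} - 1)q^{(n-d)p}` holds for every `p ∈ [1,∞)`, and in
particular `‖Ê‖_p ≤ q^{-d}(#E)^{1-1/p}`. -/
theorem lp_diagonal {F : Type} [Field F] [Fintype F] [DecidableEq F]
    (m n : ℕ) (hm : 2 ≤ m) (hn : 1 ≤ n)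
    (χ : AddChar F ℂ) (hχ : ∃ a, χ a ≠ 1)
    (E : Finset (Fin m × Fin n → F))
    (hE : E = Finset.univ.image fun k : Fin n → F =>
      (fun ji : Fin m × Fin n => k ji.2 : Fin m × Fin n → F)) :
    E.card = Fintype.card F ^ n ∧
    ∀ p : ℝ, 1 ≤ p →
      lpNorm χ E p ^ p =
        ((Fintype.card F : ℝ) ^ (m * n))⁻¹ * ((Fintype.card F : ℝ) ^ (m * n - n) - 1) *
          (Fintype.card F : ℝ) ^ (((n : ℝ) - (m * n : ℕ)) * p) ∧
      lpNorm χ E p ≤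
        ((Fintype.card F : ℝ) ^ (m * n))⁻¹ * (E.card : ℝ) ^ (1 - 1 / p) := by
  classical
  set q := Fintype.card F with hqdef
  have hq1 : 1 < q := Fintype.one_lt_card
  have hQ0 : (0 : ℝ) < (q : ℝ) := by exact_mod_cast Nat.lt_of_lt_of_le Nat.zero_lt_one hq1.le
  have hQ1 : (1 : ℝ) ≤ (q : ℝ) := by exact_mod_cast hq1.le
  have hinj : Function.Injective
      (fun k : Fin n → F => (fun ji : Fin m × Fin n => k ji.2 : Fin m × Fin n → F)) := by
    intro k k' h
    funext i
    exact congrFun h ((⟨0, by omega⟩ : Fin m), i)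
  have hcardE : E.card = q ^ n := by
    rw [hE, Finset.card_image_of_injective _ hinj, Finset.card_univ]
    simp [Fintype.card_fun, hqdef]
  refine ⟨hcardE, ?_⟩
  intro p hp
  have hp0 : (0 : ℝ) < p := lt_of_lt_of_le one_pos hp
  have hcι : Fintype.card (Fin m × Fin n) = m * n := by simp
  -- value of the Fourier transform
  have hFT : ∀ x : Fin m × Fin n → F,
      fourierTransform χ E x = ((q : ℂ) ^ (m * n))⁻¹ *
        (if (fun i => ∑ j, x (j, i)) = (0 : Fin n → F) then ((q : ℂ) ^ n) else 0) := by
    intro x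
    rw [fourierTransform, hcι, hE,
      Finset.sum_image (fun k _ k' _ h => hinj h)]
    congr 1
    have hswap : ∀ k : Fin n → F,
        ∑ ji : Fin m × Fin n, x ji * k ji.2 = ∑ i, (∑ j, x (j, i)) * k i := by
      intro k
      rw [Fintype.sum_prod_type, Finset.sum_comm]
      exact Finset.sum_congr rfl fun i _ => by simp [Finset.sum_mul]
    calc ∑ k : Fin n → F, χ (-(∑ ji : Fin m × Fin n, x ji * k ji.2))
        = ∑ k : Fin n → F, χ (-(∑ i, (∑ j, x (j, i)) * k i)) := by
          exact Finset.sum_congr rfl fun k _ => by rw [hswap k]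
      _ = _ := charSum χ hχ _
  -- absolute value to the p
  set C : ℝ := ((q : ℝ) ^ (m * n))⁻¹ * (q : ℝ) ^ n with hC
  have hC0 : 0 ≤ C := by positivity
  have habs : ∀ x : Fin m × Fin n → F,
      ‖fourierTransform χ E x‖ ^ p =
        if (fun i => ∑ j, x (j, i)) = (0 : Fin n → F) then C ^ p else 0 := by
    intro x
    rw [hFT x]
    split_ifs with h
    · rw [norm_mul, norm_inv, norm_pow, norm_pow, Complex.norm_natCast, hC]
    · simp [Real.zero_rpow (ne_of_gt hp0)]
  -- the sum
  have hub : 1 ≤ q ^ (m * n - n) := Nat.one_le_pow _ _ (by omega)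
  have hsum : ∑ x ∈ Finset.univ.filter (fun x : Fin m × Fin n → F => x ≠ 0),
      ‖fourierTransform χ E x‖ ^ p
      = ((q : ℝ) ^ (m * n - n) - 1) * C ^ p := by
    rw [Finset.sum_congr rfl fun x _ => habs x, ← Finset.sum_filter,
      Finset.filter_filter]
    have heq : Finset.univ.filter (fun x : Fin m × Fin n → F =>
        x ≠ 0 ∧ (fun i => ∑ j, x (j, i)) = (0 : Fin n → F))
        = (Finset.univ.filter (fun x : Fin m × Fin n → F =>
            (fun i => ∑ j, x (j, i)) = (0 : Fin n → F))).erase 0 := by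
      ext x
      simp [Finset.mem_erase, and_comm]
    have h0mem : (0 : Fin m × Fin n → F) ∈ Finset.univ.filter
        (fun x : Fin m × Fin n → F =>
          (fun i => ∑ j, x (j, i)) = (0 : Fin n → F)) := by
      simp
      funext i
      simp
    rw [heq, Finset.sum_const, Finset.card_erase_of_mem h0mem, kerCard (by omega),
      nsmul_eq_mul, Nat.cast_sub hub, Nat.cast_pow, Nat.cast_one]
  -- the value of C ^ p
  have hCval : C ^ p = (q : ℝ) ^ (((n : ℝ) - ((m * n : ℕ) : ℝ)) * p) := by
    have h1 : C = (q : ℝ) ^ ((n : ℝ) - ((m * n : ℕ) : ℝ)) := by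
      rw [Real.rpow_sub hQ0, Real.rpow_natCast, Real.rpow_natCast, hC,
        div_eq_mul_inv, mul_comm]
    rw [h1, ← Real.rpow_mul hQ0.le]
  -- the value of lpNorm ^ p
  set X : ℝ := ((q : ℝ) ^ (m * n))⁻¹ * (((q : ℝ) ^ (m * n - n) - 1) * C ^ p) with hXdef
  have hQsub1 : (0 : ℝ) ≤ (q : ℝ) ^ (m * n - n) - 1 := by
    have h : (1 : ℝ) ≤ (q : ℝ) ^ (m * n - n) := by exact_mod_cast hub
    linarith
  have hCp0 : 0 ≤ C ^ p := Real.rpow_nonneg hC0 p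
  have hX0 : 0 ≤ X := by
    rw [hXdef]
    have := hQsub1
    positivity
  have hlpP : lpNorm χ E p ^ p = X := by
    rw [lpNorm, hcι, hsum, ← Real.rpow_mul hX0, one_div_mul_cancel (ne_of_gt hp0),
      Real.rpow_one]
  have hmnle : n ≤ m * n := Nat.le_mul_of_pos_left n (by omega)
  constructor
  · rw [hlpP, hXdef, hCval]; ring
  · have hlp : lpNorm χ E p = X ^ (1 / p) := by rw [lpNorm, hcι, hsum]
    set Y : ℝ := ((q : ℝ) ^ (m * n))⁻¹ * ((E.card : ℝ)) ^ (1 - 1 / p) with hY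
    have hY0 : 0 ≤ Y := by positivity
    set e : ℝ := -(n : ℝ) + ((n : ℝ) - ((m * n : ℕ) : ℝ)) * p with he
    have hcast : (((m * n - n : ℕ)) : ℝ) = ((m * n : ℕ) : ℝ) - (n : ℝ) := by
      rw [Nat.cast_sub hmnle]
    have hXle : X ≤ (q : ℝ) ^ e := by
      have step1 : X ≤ ((q : ℝ) ^ (m * n))⁻¹ * ((q : ℝ) ^ (m * n - n) * C ^ p) := by
        rw [hXdef]
        refine mul_le_mul_of_nonneg_left (mul_le_mul_of_nonneg_right ?_ hCp0) (by positivity)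
        linarith
      refine step1.trans_eq ?_
      rw [hCval, ← Real.rpow_natCast (q : ℝ) (m * n), ← Real.rpow_neg hQ0.le,
        ← Real.rpow_natCast (q : ℝ) (m * n - n), ← Real.rpow_add hQ0, ← Real.rpow_add hQ0]
      congr 1
      rw [hcast, he]
      push_cast
      ring
    have hYpe : Y ^ p = (q : ℝ) ^ e := by
      have hEc : (E.card : ℝ) = (q : ℝ) ^ ((n : ℕ) : ℝ) := by
        rw [hcardE, Real.rpow_natCast]; push_cast; ring
      rw [hY, hEc, Real.mul_rpow (by positivity) (by positivity),
        ← Real.rpow_natCast (q : ℝ) (m * n), ← Real.rpow_neg hQ0.le,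
        ← Real.rpow_mul hQ0.le, ← Real.rpow_mul hQ0.le, ← Real.rpow_mul hQ0.le,
        ← Real.rpow_add hQ0]
      congr 1
      rw [he]
      field_simp
      ring
    rw [hlp]
    calc X ^ (1 / p) ≤ ((q : ℝ) ^ e) ^ (1 / p) :=
          Real.rpow_le_rpow hX0 hXle (by positivity)
      _ = (Y ^ p) ^ (1 / p) := by rw [hYpe]
      _ = Y := by
          rw [← Real.rpow_mul hY0, mul_one_div, div_self (ne_of_gt hp0), Real.rpow_one]
end

section
/- There exists an absolute constant C such that for every prime power q and every nontrivial additive character χ of F_q, the Kloosterman sums K(a,b) = ∑_{x ∈ F_q, x ≠ 0} χ(a·x + b·x^{−1}) satisfy ( q^{−2} ∑_{(a,b) ∈ F_q² \ {(0,0)}} |K(a,b)|⁴ )^{1/4} ≤ C·√q. -/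
open Finset

private lemma kls_orth {F : Type} [Field F] [Fintype F] [DecidableEq F]
    (χ : AddChar F ℂ) (hχ : χ ≠ 1) (s : F) :
    ∑ a : F, χ (a * s) = if s = 0 then (Fintype.card F : ℂ) else 0 := by
  have := AddChar.sum_mulShift s (AddChar.IsPrimitive.of_ne_one hχ)
  rw [this]; split <;> simp

private lemma sum_swap_ab {ι κ : Type} (A : Finset ι) (Tf : Finset κ)
    (f : ι → ι → κ → κ → κ → κ → ℂ) :
    ∑ a ∈ A, ∑ b ∈ A, ∑ x ∈ Tf, ∑ y ∈ Tf, ∑ u ∈ Tf, ∑ v ∈ Tf, f a b x y u v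
      = ∑ x ∈ Tf, ∑ y ∈ Tf, ∑ u ∈ Tf, ∑ v ∈ Tf, ∑ a ∈ A, ∑ b ∈ A, f a b x y u v := by
  calc ∑ a ∈ A, ∑ b ∈ A, ∑ x ∈ Tf, ∑ y ∈ Tf, ∑ u ∈ Tf, ∑ v ∈ Tf, f a b x y u v
      = ∑ a ∈ A, ∑ x ∈ Tf, ∑ b ∈ A, ∑ y ∈ Tf, ∑ u ∈ Tf, ∑ v ∈ Tf, f a b x y u v :=
        sum_congr rfl fun a _ => Finset.sum_comm
    _ = ∑ a ∈ A, ∑ x ∈ Tf, ∑ y ∈ Tf, ∑ b ∈ A, ∑ u ∈ Tf, ∑ v ∈ Tf, f a b x y u v :=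
        sum_congr rfl fun a _ => sum_congr rfl fun x _ => Finset.sum_comm
    _ = ∑ a ∈ A, ∑ x ∈ Tf, ∑ y ∈ Tf, ∑ u ∈ Tf, ∑ b ∈ A, ∑ v ∈ Tf, f a b x y u v :=
        sum_congr rfl fun a _ => sum_congr rfl fun x _ => sum_congr rfl fun y _ =>
          Finset.sum_comm
    _ = ∑ a ∈ A, ∑ x ∈ Tf, ∑ y ∈ Tf, ∑ u ∈ Tf, ∑ v ∈ Tf, ∑ b ∈ A, f a b x y u v :=
        sum_congr rfl fun a _ => sum_congr rfl fun x _ => sum_congr rfl fun y _ =>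
          sum_congr rfl fun u _ => Finset.sum_comm
    _ = ∑ x ∈ Tf, ∑ a ∈ A, ∑ y ∈ Tf, ∑ u ∈ Tf, ∑ v ∈ Tf, ∑ b ∈ A, f a b x y u v :=
        Finset.sum_comm
    _ = ∑ x ∈ Tf, ∑ y ∈ Tf, ∑ a ∈ A, ∑ u ∈ Tf, ∑ v ∈ Tf, ∑ b ∈ A, f a b x y u v :=
        sum_congr rfl fun x _ => Finset.sum_comm
    _ = ∑ x ∈ Tf, ∑ y ∈ Tf, ∑ u ∈ Tf, ∑ a ∈ A, ∑ v ∈ Tf, ∑ b ∈ A, f a b x y u v :=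
        sum_congr rfl fun x _ => sum_congr rfl fun y _ => Finset.sum_comm
    _ = ∑ x ∈ Tf, ∑ y ∈ Tf, ∑ u ∈ Tf, ∑ v ∈ Tf, ∑ a ∈ A, ∑ b ∈ A, f a b x y u v :=
        sum_congr rfl fun x _ => sum_congr rfl fun y _ => sum_congr rfl fun u _ =>
          Finset.sum_comm

private lemma kls_complex {F : Type} [Field F] [Fintype F] [DecidableEq F]
    (χ : AddChar F ℂ) (hχ : χ ≠ 1) :
    ∑ a : F, ∑ b : F,
        ((‖∑ x ∈ univ.filter (fun x : F => x ≠ 0), χ (a * x + b * x⁻¹)‖ ^ (4:ℕ) : ℝ) : ℂ)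
      = ∑ x ∈ univ.filter (fun x : F => x ≠ 0), ∑ y ∈ univ.filter (fun x : F => x ≠ 0),
          ∑ u ∈ univ.filter (fun x : F => x ≠ 0), ∑ v ∈ univ.filter (fun x : F => x ≠ 0),
            (if u + v - x - y = 0 then (Fintype.card F : ℂ) else 0) *
            (if u⁻¹ + v⁻¹ - x⁻¹ - y⁻¹ = 0 then (Fintype.card F : ℂ) else 0) := by
  classical
  set T : Finset F := univ.filter (fun x : F => x ≠ 0) with hT
  set K : F → F → ℂ := fun a b => ∑ x ∈ T, χ (a * x + b * x⁻¹) with hK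
  have conjK : ∀ a b : F, (starRingEnd ℂ) (K a b) = ∑ x ∈ T, χ (-(a * x + b * x⁻¹)) := by
    intro a b
    rw [map_sum]
    exact Finset.sum_congr rfl fun x _ => (AddChar.map_neg_eq_conj χ _).symm
  have expand : ∀ a b : F,
      ((‖K a b‖ ^ (4:ℕ) : ℝ) : ℂ)
        = ∑ x ∈ T, ∑ y ∈ T, ∑ u ∈ T, ∑ v ∈ T,
            χ (a * (u + v - x - y)) * χ (b * (u⁻¹ + v⁻¹ - x⁻¹ - y⁻¹)) := by
    intro a b
    have h4 : ((‖K a b‖ ^ (4:ℕ) : ℝ) : ℂ)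
        = K a b * K a b * (starRingEnd ℂ) (K a b) * (starRingEnd ℂ) (K a b) := by
      have h1 : ((‖K a b‖ ^ (4:ℕ) : ℝ) : ℂ)
          = (((‖K a b‖ ^ 2 : ℝ) : ℂ)) ^ 2 := by push_cast; ring
      rw [h1, Complex.sq_norm, ← Complex.mul_conj]; ring
    rw [h4, conjK]
    show (∑ x ∈ T, χ (a * x + b * x⁻¹)) * (∑ y ∈ T, χ (a * y + b * y⁻¹))
        * (∑ u ∈ T, χ (-(a * u + b * u⁻¹))) * (∑ v ∈ T, χ (-(a * v + b * v⁻¹))) = _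
    simp only [Finset.sum_mul, Finset.mul_sum]
    refine sum_congr rfl fun x _ => sum_congr rfl fun y _ => sum_congr rfl fun u _ =>
      sum_congr rfl fun v _ => ?_
    simp only [← AddChar.map_add_eq_mul]
    congr 1
    ring
  refine (Finset.sum_congr rfl fun a _ => Finset.sum_congr rfl fun b _ => expand a b).trans ?_
  rw [sum_swap_ab univ T (fun a b x y u v => χ (a * (u + v - x - y)) * χ (b * (u⁻¹ + v⁻¹ - x⁻¹ - y⁻¹)))]
  refine sum_congr rfl fun x _ => sum_congr rfl fun y _ => sum_congr rfl fun u _ =>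
    sum_congr rfl fun v _ => ?_
  rw [← Finset.sum_mul_sum, kls_orth χ hχ, kls_orth χ hχ]

private lemma quad_cases {F : Type} [Field F] {x y u v : F}
    (hx : x ≠ 0) (hy : y ≠ 0) (hu : u ≠ 0) (hv : v ≠ 0)
    (h1 : x + y - u - v = 0) (h2 : x⁻¹ + y⁻¹ - u⁻¹ - v⁻¹ = 0) :
    (u = x ∧ v = y) ∨ (u = y ∧ v = x) ∨ (y = -x ∧ v = -u) := by
  have h1' : x + y = u + v := by linear_combination h1
  have e : x⁻¹ + y⁻¹ = u⁻¹ + v⁻¹ := by linear_combination h2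
  have h2' : (x + y) * (u * v) = (u + v) * (x * y) := by
    field_simp at e
    linear_combination e
  by_cases hs : x + y = 0
  · right; right
    refine ⟨by linear_combination hs, ?_⟩
    have huv0 : u + v = 0 := by linear_combination hs - h1'
    linear_combination huv0
  · have huv : u * v = x * y := by
      have hcc : (x + y) * (u * v) = (x + y) * (x * y) := by
        linear_combination h2' - x * y * h1'
      exact mul_left_cancel₀ hs hcc
    have hz : (u - x) * (u - y) = 0 := by linear_combination (-u) * h1' - huv
    rcases mul_eq_zero.mp hz with h | h
    · have hux : u = x := by linear_combination h
      exact Or.inl ⟨hux, by linear_combination -h1' - hux⟩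
    · have huy : u = y := by linear_combination h
      exact Or.inr (Or.inl ⟨huy, by linear_combination -h1' - huy⟩)

private lemma kls_count {F : Type} [Field F] [Fintype F] [DecidableEq F] :
    ∑ x ∈ univ.filter (fun x : F => x ≠ 0), ∑ y ∈ univ.filter (fun x : F => x ≠ 0),
        ∑ u ∈ univ.filter (fun x : F => x ≠ 0), ∑ v ∈ univ.filter (fun x : F => x ≠ 0),
          (if u + v - x - y = 0 then (Fintype.card F : ℝ) else 0) *
          (if u⁻¹ + v⁻¹ - x⁻¹ - y⁻¹ = 0 then (Fintype.card F : ℝ) else 0)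
      ≤ 3 * (Fintype.card F : ℝ) ^ 4 := by
  classical
  set T : Finset F := univ.filter (fun x : F => x ≠ 0) with hT
  set q : ℝ := (Fintype.card F : ℝ) with hq
  have hq0 : (0 : ℝ) ≤ q := Nat.cast_nonneg _
  have hTq : (T.card : ℝ) ≤ q := by
    rw [hq]
    exact_mod_cast Finset.card_le_univ T
  have i01 : ∀ (P : Prop) [Decidable P], (0:ℝ) ≤ if P then (1:ℝ) else 0 := fun P _ => by
    split_ifs <;> norm_num
  -- pointwise bound
  have hpoint : ∀ x ∈ T, ∀ y ∈ T, ∀ u ∈ T, ∀ v ∈ T,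
      (if u + v - x - y = 0 then q else 0) * (if u⁻¹ + v⁻¹ - x⁻¹ - y⁻¹ = 0 then q else 0)
        ≤ q ^ 2 * ((if x = u then (1:ℝ) else 0) * (if y = v then (1:ℝ) else 0)
            + (if y = u then (1:ℝ) else 0) * (if x = v then (1:ℝ) else 0)
            + (if y = -x then (1:ℝ) else 0) * (if v = -u then (1:ℝ) else 0)) := by
    intro x hx y hy u hu v hv
    have hx0 : x ≠ 0 := (mem_filter.mp hx).2
    have hy0 : y ≠ 0 := (mem_filter.mp hy).2
    have hu0 : u ≠ 0 := (mem_filter.mp hu).2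
    have hv0 : v ≠ 0 := (mem_filter.mp hv).2
    by_cases h1 : u + v - x - y = 0
    · by_cases h2 : u⁻¹ + v⁻¹ - x⁻¹ - y⁻¹ = 0
      · have key : (1:ℝ) ≤ (if x = u then (1:ℝ) else 0) * (if y = v then (1:ℝ) else 0)
            + (if y = u then (1:ℝ) else 0) * (if x = v then (1:ℝ) else 0)
            + (if y = -x then (1:ℝ) else 0) * (if v = -u then (1:ℝ) else 0) := by
          rcases quad_cases hu0 hv0 hx0 hy0 h1 h2 with ⟨e1, e2⟩ | ⟨e1, e2⟩ | ⟨e1, e2⟩ <;>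
            simp only [e1, e2, if_pos rfl] <;> split_ifs <;> norm_num
        rw [if_pos h1, if_pos h2]
        calc q * q = q ^ 2 * 1 := by ring
          _ ≤ _ := by
              apply mul_le_mul_of_nonneg_left key (by positivity)
      · rw [if_neg h2, mul_zero]
        exact mul_nonneg (by positivity) (add_nonneg (add_nonneg
          (mul_nonneg (i01 _) (i01 _)) (mul_nonneg (i01 _) (i01 _)))
          (mul_nonneg (i01 _) (i01 _)))
    · rw [if_neg h1, zero_mul]
      exact mul_nonneg (by positivity) (add_nonneg (add_nonneg
        (mul_nonneg (i01 _) (i01 _)) (mul_nonneg (i01 _) (i01 _)))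
        (mul_nonneg (i01 _) (i01 _)))
  have h1' : ∀ c : F, ∑ u ∈ T, (if c = u then (1:ℝ) else 0) ≤ 1 := by
    intro c; rw [Finset.sum_ite_eq]; split_ifs <;> norm_num
  have h2' : ∀ c : F, ∑ v ∈ T, (if v = c then (1:ℝ) else 0) ≤ 1 := by
    intro c; rw [Finset.sum_ite_eq']; split_ifs <;> norm_num
  have hA : ∑ x ∈ T, ∑ y ∈ T, ∑ u ∈ T, ∑ v ∈ T,
      (if x = u then (1:ℝ) else 0) * (if y = v then (1:ℝ) else 0) ≤ q ^ 2 := by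
    calc ∑ x ∈ T, ∑ y ∈ T, ∑ u ∈ T, ∑ v ∈ T,
          (if x = u then (1:ℝ) else 0) * (if y = v then (1:ℝ) else 0)
        = ∑ x ∈ T, ∑ y ∈ T, (∑ u ∈ T, if x = u then (1:ℝ) else 0)
            * (∑ v ∈ T, if y = v then (1:ℝ) else 0) :=
          sum_congr rfl fun x _ => sum_congr rfl fun y _ => (Finset.sum_mul_sum _ _ _ _).symm
      _ ≤ ∑ x ∈ T, ∑ y ∈ T, (1:ℝ) := by
          refine sum_le_sum fun x _ => sum_le_sum fun y _ => ?_
          exact mul_le_one₀ (h1' x) (sum_nonneg fun v _ => by positivity) (h1' y)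
      _ = (T.card : ℝ) * T.card := by simp [mul_comm]
      _ ≤ q * q := mul_le_mul hTq hTq (Nat.cast_nonneg _) hq0
      _ = q ^ 2 := by ring
  have hB : ∑ x ∈ T, ∑ y ∈ T, ∑ u ∈ T, ∑ v ∈ T,
      (if y = u then (1:ℝ) else 0) * (if x = v then (1:ℝ) else 0) ≤ q ^ 2 := by
    calc ∑ x ∈ T, ∑ y ∈ T, ∑ u ∈ T, ∑ v ∈ T,
          (if y = u then (1:ℝ) else 0) * (if x = v then (1:ℝ) else 0)
        = ∑ x ∈ T, ∑ y ∈ T, (∑ u ∈ T, if y = u then (1:ℝ) else 0)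
            * (∑ v ∈ T, if x = v then (1:ℝ) else 0) :=
          sum_congr rfl fun x _ => sum_congr rfl fun y _ => (Finset.sum_mul_sum _ _ _ _).symm
      _ ≤ ∑ x ∈ T, ∑ y ∈ T, (1:ℝ) := by
          refine sum_le_sum fun x _ => sum_le_sum fun y _ => ?_
          exact mul_le_one₀ (h1' y) (sum_nonneg fun v _ => by positivity) (h1' x)
      _ = (T.card : ℝ) * T.card := by simp [mul_comm]
      _ ≤ q * q := mul_le_mul hTq hTq (Nat.cast_nonneg _) hq0
      _ = q ^ 2 := by ring
  have hC : ∑ x ∈ T, ∑ y ∈ T, ∑ u ∈ T, ∑ v ∈ T,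
      (if y = -x then (1:ℝ) else 0) * (if v = -u then (1:ℝ) else 0) ≤ q ^ 2 := by
    have hin : ∀ x y : F, ∑ u ∈ T, ∑ v ∈ T,
        (if y = -x then (1:ℝ) else 0) * (if v = -u then (1:ℝ) else 0)
          ≤ (if y = -x then (1:ℝ) else 0) * T.card := by
      intro x y
      calc ∑ u ∈ T, ∑ v ∈ T, (if y = -x then (1:ℝ) else 0) * (if v = -u then (1:ℝ) else 0)
          = (if y = -x then (1:ℝ) else 0) * ∑ u ∈ T, ∑ v ∈ T, (if v = -u then (1:ℝ) else 0) := by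
            simp only [Finset.mul_sum]
        _ ≤ (if y = -x then (1:ℝ) else 0) * ∑ u ∈ T, (1:ℝ) := by
            refine mul_le_mul_of_nonneg_left ?_ (by split_ifs <;> norm_num)
            exact sum_le_sum fun u _ => h2' (-u)
        _ = (if y = -x then (1:ℝ) else 0) * T.card := by simp
    calc ∑ x ∈ T, ∑ y ∈ T, ∑ u ∈ T, ∑ v ∈ T,
          (if y = -x then (1:ℝ) else 0) * (if v = -u then (1:ℝ) else 0)
        ≤ ∑ x ∈ T, ∑ y ∈ T, (if y = -x then (1:ℝ) else 0) * T.card := by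
          exact sum_le_sum fun x _ => sum_le_sum fun y _ => hin x y
      _ = ∑ x ∈ T, (∑ y ∈ T, (if y = -x then (1:ℝ) else 0)) * T.card := by
          simp only [Finset.sum_mul]
      _ ≤ ∑ x ∈ T, (1:ℝ) * T.card := by
          refine sum_le_sum fun x _ => ?_
          exact mul_le_mul_of_nonneg_right (h2' (-x)) (Nat.cast_nonneg _)
      _ = (T.card : ℝ) * T.card := by simp [mul_comm]
      _ ≤ q * q := mul_le_mul hTq hTq (Nat.cast_nonneg _) hq0
      _ = q ^ 2 := by ring
  calc ∑ x ∈ T, ∑ y ∈ T, ∑ u ∈ T, ∑ v ∈ T,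
        (if u + v - x - y = 0 then q else 0) * (if u⁻¹ + v⁻¹ - x⁻¹ - y⁻¹ = 0 then q else 0)
      ≤ ∑ x ∈ T, ∑ y ∈ T, ∑ u ∈ T, ∑ v ∈ T,
          q ^ 2 * ((if x = u then (1:ℝ) else 0) * (if y = v then (1:ℝ) else 0)
            + (if y = u then (1:ℝ) else 0) * (if x = v then (1:ℝ) else 0)
            + (if y = -x then (1:ℝ) else 0) * (if v = -u then (1:ℝ) else 0)) := by
        exact sum_le_sum fun x hx => sum_le_sum fun y hy => sum_le_sum fun u hu =>
          sum_le_sum fun v hv => hpoint x hx y hy u hu v hv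
    _ = q ^ 2 * ((∑ x ∈ T, ∑ y ∈ T, ∑ u ∈ T, ∑ v ∈ T,
            (if x = u then (1:ℝ) else 0) * (if y = v then (1:ℝ) else 0))
          + (∑ x ∈ T, ∑ y ∈ T, ∑ u ∈ T, ∑ v ∈ T,
            (if y = u then (1:ℝ) else 0) * (if x = v then (1:ℝ) else 0))
          + (∑ x ∈ T, ∑ y ∈ T, ∑ u ∈ T, ∑ v ∈ T,
            (if y = -x then (1:ℝ) else 0) * (if v = -u then (1:ℝ) else 0))) := by
        simp only [Finset.mul_sum, Finset.sum_add_distrib, mul_add]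
    _ ≤ q ^ 2 * (q ^ 2 + q ^ 2 + q ^ 2) := by
        refine mul_le_mul_of_nonneg_left ?_ (by positivity)
        exact add_le_add (add_le_add hA hB) hC
    _ = 3 * q ^ 4 := by ring

private lemma kls_key {F : Type} [Field F] [Fintype F] [DecidableEq F]
    (χ : AddChar F ℂ) (hχ : χ ≠ 1) :
    ∑ a : F, ∑ b : F,
        ‖∑ x ∈ univ.filter (fun x : F => x ≠ 0), χ (a * x + b * x⁻¹)‖ ^ (4:ℕ)
      ≤ 3 * (Fintype.card F : ℝ) ^ 4 := by
  have hreal : ∑ a : F, ∑ b : F,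
      ‖∑ x ∈ univ.filter (fun x : F => x ≠ 0), χ (a * x + b * x⁻¹)‖ ^ (4:ℕ)
        = ∑ x ∈ univ.filter (fun x : F => x ≠ 0), ∑ y ∈ univ.filter (fun x : F => x ≠ 0),
            ∑ u ∈ univ.filter (fun x : F => x ≠ 0), ∑ v ∈ univ.filter (fun x : F => x ≠ 0),
              (if u + v - x - y = 0 then (Fintype.card F : ℝ) else 0) *
              (if u⁻¹ + v⁻¹ - x⁻¹ - y⁻¹ = 0 then (Fintype.card F : ℝ) else 0) := by
    apply Complex.ofReal_injective
    push_cast [apply_ite ((↑) : ℝ → ℂ)]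
    exact_mod_cast kls_complex χ hχ
  rw [hreal]
  exact kls_count

/-- The `L⁴` bound for Kloosterman sums `K(a,b) = ∑_{x ∈ F_q^*} χ(ax + bx⁻¹)`: there is
an absolute constant `C` such that for every finite field `F_q` and every nontrivial
additive character `χ`, `( q^{-2} ∑_{(a,b) ≠ (0,0)} |K(a,b)|⁴ )^{1/4} ≤ C√q`. -/
theorem kloosterman_sum_l4 :
    ∃ C : ℝ, 0 < C ∧
      ∀ (F : Type) [Field F] [Fintype F] [DecidableEq F],
        ∀ χ : AddChar F ℂ, (∃ a, χ a ≠ 1) →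
          (((Fintype.card F : ℝ) ^ 2)⁻¹ *
                ∑ z ∈ Finset.univ.filter (fun z : F × F => z ≠ (0, 0)),
                  ‖∑ x ∈ Finset.univ.filter (fun x : F => x ≠ 0),
                      χ (z.1 * x + z.2 * x⁻¹)‖ ^ (4 : ℕ)) ^ ((1 : ℝ) / 4) ≤
            C * Real.sqrt (Fintype.card F : ℝ) := by
  refine ⟨2, by norm_num, ?_⟩
  intro F _ _ _ χ hχ'
  have hχ : χ ≠ 1 := by
    rintro rfl
    obtain ⟨a, ha⟩ := hχ'
    exact ha (by simp)
  set q : ℝ := (Fintype.card F : ℝ) with hq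
  have hq1 : (1 : ℝ) ≤ q := by
    rw [hq]; exact_mod_cast Fintype.card_pos
  have hq0 : (0 : ℝ) < q := lt_of_lt_of_le one_pos hq1
  set S : ℝ := ∑ z ∈ Finset.univ.filter (fun z : F × F => z ≠ (0, 0)),
      ‖∑ x ∈ Finset.univ.filter (fun x : F => x ≠ 0),
        χ (z.1 * x + z.2 * x⁻¹)‖ ^ (4 : ℕ) with hS
  have hS0 : 0 ≤ S := by
    rw [hS]
    exact Finset.sum_nonneg fun z _ => by positivity
  have hSbound : S ≤ 3 * q ^ 4 := by
    calc S ≤ ∑ z : F × F, ‖∑ x ∈ Finset.univ.filter (fun x : F => x ≠ 0),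
          χ (z.1 * x + z.2 * x⁻¹)‖ ^ (4 : ℕ) := by
          rw [hS]
          exact Finset.sum_le_sum_of_subset_of_nonneg (Finset.filter_subset _ _)
            (fun z _ _ => by positivity)
      _ = ∑ a : F, ∑ b : F, ‖∑ x ∈ univ.filter (fun x : F => x ≠ 0),
            χ (a * x + b * x⁻¹)‖ ^ (4:ℕ) := Fintype.sum_prod_type _
      _ ≤ 3 * q ^ 4 := kls_key χ hχ
  have hbase : (q ^ 2)⁻¹ * S ≤ (2 * Real.sqrt q) ^ (4 : ℕ) := by
    have hsq : (Real.sqrt q) ^ (4 : ℕ) = q ^ 2 := by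
      rw [show (4:ℕ) = 2 * 2 from rfl, pow_mul, Real.sq_sqrt hq0.le]
    rw [mul_pow, hsq]
    calc (q ^ 2)⁻¹ * S ≤ (q ^ 2)⁻¹ * (3 * q ^ 4) := by
          exact mul_le_mul_of_nonneg_left hSbound (by positivity)
      _ = 3 * q ^ 2 := by field_simp
      _ ≤ (2:ℝ) ^ 4 * q ^ 2 := by nlinarith [sq_nonneg q]
  have hL0 : 0 ≤ (q ^ 2)⁻¹ * S := by positivity
  calc ((q ^ 2)⁻¹ * S) ^ ((1:ℝ)/4)
      ≤ ((2 * Real.sqrt q) ^ (4:ℕ)) ^ ((1:ℝ)/4) :=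
        Real.rpow_le_rpow hL0 hbase (by norm_num)
    _ = 2 * Real.sqrt q := by
        rw [← Real.rpow_natCast (2 * Real.sqrt q) 4, ← Real.rpow_mul (by positivity)]
        norm_num
end
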